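/- arXiv:2010.13817 — 2 statements merged into one kernel-verified Lean document; each statement's English description precedes it below -/
import Mathlib

section
/- Let d ≥ 1 and let {(p_i, φ_i)}_{i∈I} be a finite ensemble of unit vectors φ_i in ℂ^d with weights p_i ≥ 0, ∑_i p_i = 1, forming a complex projective 2-design, i.e., ∑_i p_i (|φ_i⟩⟨φ_i|)^{⊗2} = (2/(d(d+1))) Π_sym, where Π_sym is the orthogonal projector onto the symmetric subspace of ℂ^d ⊗ ℂ^d. If A is a Hermitian d×d matrix with |⟨φ_i|A|φ_i⟩| ≤ 1 for every i ∈ I, then (Tr A)² + Tr(A²) ≤ d(d+1); in particular the operator norm satisfies ‖A‖ ≤ √(d(d+1)). -/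
namespace Design

/-- `(|φ⟩⟨φ|)^{⊗2}` as a matrix on `ℂ^d ⊗ ℂ^d`. -/
noncomputable def projSq {d : ℕ} (φ : Fin d → ℂ) :
    Matrix (Fin d × Fin d) (Fin d × Fin d) ℂ :=
  Matrix.of fun x y =>
    φ x.1 * φ x.2 * (starRingEnd ℂ) (φ y.1) * (starRingEnd ℂ) (φ y.2)

/-- The swap operator `S` on `ℂ^d ⊗ ℂ^d`. -/
noncomputable def swapOp (d : ℕ) : Matrix (Fin d × Fin d) (Fin d × Fin d) ℂ :=
  Matrix.of fun x y => if x.1 = y.2 ∧ x.2 = y.1 then 1 else 0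

/-- The projector onto the symmetric subspace: `Π_sym = (𝟙 + S)/2`. -/
noncomputable def projSym (d : ℕ) : Matrix (Fin d × Fin d) (Fin d × Fin d) ℂ :=
  (2 : ℂ)⁻¹ • (1 + swapOp d)

/-- regrouping equivalence -/
def regroup (d : ℕ) : ((Fin d × Fin d) × (Fin d × Fin d)) ≃ ((Fin d × Fin d) × (Fin d × Fin d)) where
  toFun z := ((z.2.1, z.1.1), (z.2.2, z.1.2))
  invFun w := ((w.1.2, w.2.2), (w.1.1, w.2.1))
  left_inv z := rfl
  right_inv w := rfl

/-- If `{(p_i, φ_i)}` is a complex projective 2-design of unit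
vectors in `ℂ^d` and `A` is Hermitian with `|⟨φ_i|A|φ_i⟩| ≤ 1` for all `i`, then
`(Tr A)² + Tr(A²) ≤ d(d+1)`; in particular `‖Ax‖ ≤ √(d(d+1))·‖x‖` for all `x`,
i.e. the operator norm of `A` is at most `√(d(d+1))`. -/
theorem two_design_dual_bound (d : ℕ) (hd : 1 ≤ d) {ι : Type*} [Fintype ι]
    (p : ι → ℝ) (φ : ι → Fin d → ℂ)
    (hp : ∀ i, 0 ≤ p i) (hp1 : ∑ i, p i = 1)
    (hunit : ∀ i, ∑ j, Complex.normSq (φ i j) = 1)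
    (hdesign : ∑ i, p i • projSq (φ i)
      = ((2 : ℝ) / (d * (d + 1))) • projSym d)
    (A : Matrix (Fin d) (Fin d) ℂ) (hA : A.IsHermitian)
    (hfeas : ∀ i, ‖∑ j, (starRingEnd ℂ) (φ i j) * (A.mulVec (φ i)) j‖ ≤ 1) :
    ((A.trace).re) ^ 2 + ((A * A).trace).re ≤ (d : ℝ) * (d + 1) ∧
    ∀ x : Fin d → ℂ,
      Real.sqrt (∑ j, Complex.normSq ((A.mulVec x) j))
        ≤ Real.sqrt ((d : ℝ) * (d + 1)) * Real.sqrt (∑ j, Complex.normSq (x j)) := by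
  classical
  set B : Matrix (Fin d × Fin d) (Fin d × Fin d) ℂ :=
    Matrix.of (fun y x => A y.1 x.1 * A y.2 x.2) with hB
  set t : ι → ℂ := fun i => ∑ j, (starRingEnd ℂ) (φ i j) * (A.mulVec (φ i)) j with ht
  -- trace of projSq * B
  have htrace1 : ∀ i, (projSq (φ i) * B).trace = t i ^ 2 := by
    intro i
    have ht' : t i = ∑ q : Fin d × Fin d,
        (starRingEnd ℂ) (φ i q.1) * A q.1 q.2 * φ i q.2 := by
      rw [Fintype.sum_prod_type]
      simp only [ht, Matrix.mulVec, dotProduct, Finset.mul_sum]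
      exact Finset.sum_congr rfl fun j _ => Finset.sum_congr rfl fun k _ => by ring
    have hsq : t i ^ 2 = ∑ z : (Fin d × Fin d) × (Fin d × Fin d),
        ((starRingEnd ℂ) (φ i z.1.1) * A z.1.1 z.1.2 * φ i z.1.2) *
        ((starRingEnd ℂ) (φ i z.2.1) * A z.2.1 z.2.2 * φ i z.2.2) := by
      rw [sq, ht', Finset.sum_mul_sum]
      exact (Fintype.sum_prod_type (f := fun z : (Fin d × Fin d) × (Fin d × Fin d) =>
        ((starRingEnd ℂ) (φ i z.1.1) * A z.1.1 z.1.2 * φ i z.1.2) *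
        ((starRingEnd ℂ) (φ i z.2.1) * A z.2.1 z.2.2 * φ i z.2.2))).symm
    have htr : (projSq (φ i) * B).trace = ∑ z : (Fin d × Fin d) × (Fin d × Fin d),
        projSq (φ i) z.1 z.2 * B z.2 z.1 := by
      rw [Fintype.sum_prod_type]
      simp [Matrix.trace, Matrix.diag, Matrix.mul_apply]
    rw [htr, hsq]
    refine Fintype.sum_equiv (regroup d) _ _ fun z => ?_
    simp only [projSq, hB, regroup, Matrix.of_apply, Equiv.coe_fn_mk]
    ring
  -- trace of B
  have htrB : B.trace = A.trace ^ 2 := by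
    have : B.trace = (∑ a, A a a) * (∑ b, A b b) := by
      rw [Finset.sum_mul_sum]
      simp [Matrix.trace, Matrix.diag, hB, Fintype.sum_prod_type]
    rw [this, Matrix.trace, sq]
    rfl
  -- trace of swapOp * B
  have htrS : (swapOp d * B).trace = (A * A).trace := by
    have hswap : ∀ (x y : Fin d × Fin d), swapOp d x y = if (x.2, x.1) = y then 1 else 0 := by
      intro x y
      simp [swapOp, Prod.ext_iff, and_comm, eq_comm]
    have : (swapOp d * B).trace = ∑ x : Fin d × Fin d, B (x.2, x.1) x := by
      simp only [Matrix.trace, Matrix.diag, Matrix.mul_apply, hswap, ite_mul, one_mul, zero_mul]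
      exact Finset.sum_congr rfl fun x _ => by rw [Finset.sum_ite_eq]; simp
    rw [this, Fintype.sum_prod_type, Finset.sum_comm]
    simp [Matrix.trace, Matrix.diag, Matrix.mul_apply, hB]
  -- key complex identity
  have hkey : ∑ i, (p i : ℂ) * t i ^ 2
      = ((2 : ℝ) / (d * (d + 1)) : ℝ) • ((2 : ℂ)⁻¹ * (A.trace ^ 2 + (A * A).trace)) := by
    have h1 : ((∑ i, p i • projSq (φ i)) * B).trace = ∑ i, (p i : ℂ) * t i ^ 2 := by
      rw [Matrix.sum_mul, Matrix.trace_sum]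
      refine Finset.sum_congr rfl fun i _ => ?_
      rw [Matrix.smul_mul, Matrix.trace_smul, htrace1 i, Complex.real_smul]
    have h2 : ((((2 : ℝ) / (d * (d + 1))) • projSym d) * B).trace
        = ((2 : ℝ) / (d * (d + 1)) : ℝ) • ((2 : ℂ)⁻¹ * (A.trace ^ 2 + (A * A).trace)) := by
      rw [Matrix.smul_mul, Matrix.trace_smul]
      congr 1
      rw [projSym, Matrix.smul_mul, Matrix.trace_smul, smul_eq_mul]
      congr 1
      rw [Matrix.add_mul, Matrix.trace_add, Matrix.one_mul, htrB, htrS]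
    rw [← h1, ← h2, hdesign]
  -- clean up the coefficient
  have hdpos : (0 : ℝ) < (d : ℝ) * (d + 1) := by
    have : (1 : ℝ) ≤ (d : ℝ) := by exact_mod_cast hd
    nlinarith
  have hdc : ((d : ℂ) * ((d : ℂ) + 1)) ≠ 0 := by
    have : (((d : ℝ) * ((d : ℝ) + 1) : ℝ) : ℂ) ≠ 0 := by
      exact_mod_cast ne_of_gt hdpos
    push_cast at this
    convert this using 2
  have hkey2 : A.trace ^ 2 + (A * A).trace
      = (((d : ℝ) * ((d : ℝ) + 1) : ℝ) : ℂ) * ∑ i, (p i : ℂ) * t i ^ 2 := by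
    rw [hkey, Complex.real_smul]
    push_cast
    have hd0 : (d : ℂ) ≠ 0 := by exact_mod_cast (show d ≠ 0 by omega)
    field_simp
  -- real part bound
  have him : A.trace.im = 0 := by
    have : ∀ j, (A j j).im = 0 := by
      intro j
      have := congrFun (congrFun hA.symm j) j
      rw [Matrix.conjTranspose_apply] at this
      have h2 := congrArg Complex.im this
      simp at h2
      linarith
    simp [Matrix.trace, Matrix.diag, Complex.im_sum, this]
  have hsum_re : (∑ i, (p i : ℂ) * t i ^ 2).re ≤ 1 := by
    rw [Complex.re_sum]
    calc ∑ i, ((p i : ℂ) * t i ^ 2).re ≤ ∑ i, p i := by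
          refine Finset.sum_le_sum fun i _ => ?_
          have : ((p i : ℂ) * t i ^ 2).re = p i * (t i ^ 2).re := by
            simp [Complex.mul_re]
          rw [this]
          have h1 : (t i ^ 2).re ≤ ‖t i ^ 2‖ := Complex.re_le_norm _
          have h2 : ‖t i ^ 2‖ ≤ 1 := by
            rw [norm_pow]
            have habs : ‖t i‖ ≤ 1 := by
              have := hfeas i
              simpa [ht] using this
            calc ‖t i‖ ^ 2 ≤ 1 ^ 2 :=
                  pow_le_pow_left₀ (norm_nonneg _) habs 2
              _ = 1 := one_pow 2
          nlinarith [hp i]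
      _ = 1 := hp1
  have hpart1 : ((A.trace).re) ^ 2 + ((A * A).trace).re ≤ (d : ℝ) * (d + 1) := by
    have hre := congrArg Complex.re hkey2
    have hlhs : (A.trace ^ 2 + (A * A).trace).re = (A.trace.re) ^ 2 + ((A * A).trace).re := by
      simp [Complex.add_re, sq, Complex.mul_re, him]
    have hrhs : ((((d : ℝ) * ((d : ℝ) + 1) : ℝ) : ℂ) * ∑ i, (p i : ℂ) * t i ^ 2).re
        = ((d : ℝ) * ((d : ℝ) + 1)) * (∑ i, (p i : ℂ) * t i ^ 2).re := by
      simp [Complex.re_ofReal_mul]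
    rw [hlhs, hrhs] at hre
    rw [hre]
    calc ((d : ℝ) * ((d : ℝ) + 1)) * (∑ i, (p i : ℂ) * t i ^ 2).re
        ≤ ((d : ℝ) * ((d : ℝ) + 1)) * 1 := by
          exact mul_le_mul_of_nonneg_left hsum_re (le_of_lt hdpos)
      _ = (d : ℝ) * ((d : ℝ) + 1) := mul_one _
  refine ⟨hpart1, ?_⟩
  -- Frobenius norm
  have hfrob : ((A * A).trace).re = ∑ j, ∑ k, Complex.normSq (A j k) := by
    have : (A * A).trace = (((∑ j, ∑ k, Complex.normSq (A j k)) : ℝ) : ℂ) := by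
      push_cast
      simp only [Matrix.trace, Matrix.diag, Matrix.mul_apply]
      refine Finset.sum_congr rfl fun j _ => Finset.sum_congr rfl fun k _ => ?_
      have hkj : A k j = (starRingEnd ℂ) (A j k) := by
        have := congrFun (congrFun hA k) j
        rw [Matrix.conjTranspose_apply] at this
        exact this.symm
      rw [hkj, Complex.mul_conj]
    rw [this, Complex.ofReal_re]
  have hfrob_le : ∑ j, ∑ k, Complex.normSq (A j k) ≤ (d : ℝ) * (d + 1) := by
    nlinarith [sq_nonneg ((A.trace).re), hpart1, hfrob]
  intro x
  have hCS : ∑ j, Complex.normSq ((A.mulVec x) j)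
      ≤ (∑ j, ∑ k, Complex.normSq (A j k)) * ∑ k, Complex.normSq (x k) := by
    rw [Finset.sum_mul]
    refine Finset.sum_le_sum fun j _ => ?_
    have h1 : ‖(A.mulVec x) j‖ ≤ ∑ k, ‖A j k‖ * ‖x k‖ := by
      calc ‖(A.mulVec x) j‖ = ‖∑ k, A j k * x k‖ := by
            simp [Matrix.mulVec, dotProduct]
        _ ≤ ∑ k, ‖A j k * x k‖ := norm_sum_le _ _
        _ = ∑ k, ‖A j k‖ * ‖x k‖ := by simp [norm_mul]
    have h2 : (∑ k, ‖A j k‖ * ‖x k‖) ^ 2 ≤ (∑ k, ‖A j k‖ ^ 2) * ∑ k, ‖x k‖ ^ 2 :=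
      Finset.sum_mul_sq_le_sq_mul_sq _ _ _
    have h3 : Complex.normSq ((A.mulVec x) j) = ‖(A.mulVec x) j‖ ^ 2 := by
      rw [← Complex.sq_norm]
    have h4 : ∀ z : ℂ, Complex.normSq z = ‖z‖ ^ 2 := fun z => by
      rw [← Complex.sq_norm]
    rw [h3]
    calc ‖(A.mulVec x) j‖ ^ 2 ≤ (∑ k, ‖A j k‖ * ‖x k‖) ^ 2 := by
          exact pow_le_pow_left₀ (norm_nonneg _) h1 2
      _ ≤ (∑ k, ‖A j k‖ ^ 2) * ∑ k, ‖x k‖ ^ 2 := h2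
      _ = (∑ k, Complex.normSq (A j k)) * ∑ k, Complex.normSq (x k) := by
          simp [h4]
  have hfinal : ∑ j, Complex.normSq ((A.mulVec x) j)
      ≤ ((d : ℝ) * (d + 1)) * ∑ k, Complex.normSq (x k) := by
    have hxnn : (0 : ℝ) ≤ ∑ k, Complex.normSq (x k) :=
      Finset.sum_nonneg fun k _ => Complex.normSq_nonneg _
    calc ∑ j, Complex.normSq ((A.mulVec x) j)
        ≤ (∑ j, ∑ k, Complex.normSq (A j k)) * ∑ k, Complex.normSq (x k) := hCS
      _ ≤ ((d : ℝ) * (d + 1)) * ∑ k, Complex.normSq (x k) :=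
          mul_le_mul_of_nonneg_right hfrob_le hxnn
  calc Real.sqrt (∑ j, Complex.normSq ((A.mulVec x) j))
      ≤ Real.sqrt (((d : ℝ) * (d + 1)) * ∑ k, Complex.normSq (x k)) := Real.sqrt_le_sqrt hfinal
    _ = Real.sqrt ((d : ℝ) * (d + 1)) * Real.sqrt (∑ j, Complex.normSq (x j)) := by
        rw [Real.sqrt_mul (le_of_lt hdpos)]


end Design
end

section
/- Let |G⟩ be the unit vector in ℂ² whose rank-one projector is ½(I + (X+Y+Z)/√3), where X, Y, Z are the Pauli matrices. Then the maximum of |⟨φ|G⟩|² over the six single-qubit pure stabilizer states φ (the normalized eigenvectors of X, Y, and Z) equals (3+√3)/6, and consequently 𝔇_min(G) = log₂(3 − √3). -/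
namespace Magic1

/-- The Pauli `X` matrix on a single qubit. -/
noncomputable def Xm : Matrix (ZMod 2) (ZMod 2) ℂ :=
  Matrix.of fun i j => if i = j then 0 else 1

/-- The Pauli `Y` matrix on a single qubit. -/
noncomputable def Ym : Matrix (ZMod 2) (ZMod 2) ℂ :=
  Matrix.of fun i j =>
    if i = 0 ∧ j = 1 then -Complex.I else if i = 1 ∧ j = 0 then Complex.I else 0

/-- The Pauli `Z` matrix on a single qubit. -/
noncomputable def Zm : Matrix (ZMod 2) (ZMod 2) ℂ :=
  Matrix.of fun i j => if i = j then (if i = 0 then 1 else -1) else 0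

/-- The six single-qubit pure stabilizer states: the normalized eigenvectors of
the Pauli matrices `X`, `Y`, `Z`. -/
def IsStabState1 (φ : ZMod 2 → ℂ) : Prop :=
  (∑ x, Complex.normSq (φ x)) = 1 ∧
  ∃ c : ℂ, Xm.mulVec φ = c • φ ∨ Ym.mulVec φ = c • φ ∨ Zm.mulVec φ = c • φ

lemma sum_zmod2 {M : Type*} [AddCommMonoid M] (f : ZMod 2 → M) : ∑ x, f x = f 0 + f 1 :=
  Fin.sum_univ_two f

lemma mulVec2 (M : Matrix (ZMod 2) (ZMod 2) ℂ) (v : ZMod 2 → ℂ) (i : ZMod 2) :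
    M.mulVec v i = M i 0 * v 0 + M i 1 * v 1 := by
  unfold Matrix.mulVec dotProduct
  exact sum_zmod2 _

lemma hs3 : ((Real.sqrt 3 : ℝ) : ℂ) ^ 2 = 3 := by
  norm_cast
  exact Real.sq_sqrt (by norm_num)

lemma hsne : ((Real.sqrt 3 : ℝ) : ℂ) ≠ 0 := by
  simp [Real.sqrt_eq_zero']

lemma vplus : (2:ℂ)⁻¹ * (1 + ((Real.sqrt 3 : ℝ) : ℂ)⁻¹) = (((3 + Real.sqrt 3)/6 : ℝ) : ℂ) := by
  have h := hs3
  have hne := hsne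
  push_cast
  field_simp
  linear_combination (-2:ℂ)*h

lemma vminus : (2:ℂ)⁻¹ * (1 - ((Real.sqrt 3 : ℝ) : ℂ)⁻¹) = (((3 - Real.sqrt 3)/6 : ℝ) : ℂ) := by
  have h := hs3
  have hne := hsne
  push_cast
  field_simp
  linear_combination (2:ℂ)*h

lemma norm_sq_cast (z : ℂ) : ((‖z‖^2 : ℝ) : ℂ) = z * (starRingEnd ℂ) z := by
  rw [Complex.mul_conj]
  norm_cast
  rw [Complex.sq_norm]


local notation "conj'" => starRingEnd ℂ

lemma overlap_cases (s a b p q c : ℂ)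
    (h00 : a * conj' a = 2⁻¹ * (1 + s⁻¹))
    (h01 : a * conj' b = 2⁻¹ * (s⁻¹ * (1 - Complex.I)))
    (h10 : b * conj' a = 2⁻¹ * (s⁻¹ * (1 + Complex.I)))
    (h11 : b * conj' b = 2⁻¹ * (1 - s⁻¹))
    (hpq : p * conj' p + q * conj' q = 1)
    (hc : (q = c * p ∧ p = c * q) ∨ (-(Complex.I * q) = c * p ∧ Complex.I * p = c * q) ∨
      (p = c * p ∧ -q = c * q)) :
    (conj' p * a + conj' q * b) * conj' (conj' p * a + conj' q * b) = 2⁻¹ * (1 + s⁻¹) ∨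
    (conj' p * a + conj' q * b) * conj' (conj' p * a + conj' q * b) = 2⁻¹ * (1 - s⁻¹) := by
  have hI := Complex.I_sq
  rcases hc with ⟨hq, hp⟩ | ⟨hq, hp⟩ | ⟨hp, hq⟩
  · -- X eigenvector
    by_cases hp0 : p = 0
    · exfalso
      have hq0 : q = 0 := by rw [hq, hp0, mul_zero]
      rw [hp0, hq0] at hpq
      simp at hpq
    · have hc2 : c ^ 2 = 1 := by
        have h2 : (c ^ 2 - 1) * p = 0 := by linear_combination (-c) * hq - hp
        rcases mul_eq_zero.mp h2 with h | h
        · linear_combination h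
        · exact absurd h hp0
      rcases mul_eq_zero.mp (show (c - 1) * (c + 1) = (0:ℂ) by linear_combination hc2)
          with h | h
      · have hcc : c = 1 := by linear_combination h
        have hqp : q = p := by rw [hq, hcc, one_mul]
        rw [hqp] at hpq
        have hpp : p * conj' p = 2⁻¹ := by linear_combination 2⁻¹ * hpq
        left
        rw [hqp]
        simp only [map_add, map_mul, Complex.conj_conj]
        linear_combination (p * conj' p) * (h00 + h01 + h10 + h11) + (1 + s⁻¹) * hpp
      · have hcc : c = -1 := by linear_combination h
        have hqp : q = -p := by rw [hq, hcc]; ring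
        rw [hqp] at hpq
        have hpp : p * conj' p = 2⁻¹ := by
          simp only [map_neg] at hpq
          linear_combination 2⁻¹ * hpq
        right
        rw [hqp]
        simp only [map_add, map_mul, map_neg, Complex.conj_conj]
        linear_combination (p * conj' p) * (h00 - h01 - h10 + h11) + (1 - s⁻¹) * hpp
  · -- Y eigenvector
    by_cases hp0 : p = 0
    · exfalso
      have hq0 : q = 0 := by
        have h := hq
        rw [hp0, mul_zero, neg_eq_zero, mul_eq_zero] at h
        rcases h with h | h
        · exact absurd h Complex.I_ne_zero
        · exact h
      rw [hp0, hq0] at hpq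
      simp at hpq
    · have hc2 : c ^ 2 = 1 := by
        have h2 : (c ^ 2 - 1) * p = 0 := by
          linear_combination (-c) * hq + Complex.I * hp + (-p) * hI
        rcases mul_eq_zero.mp h2 with h | h
        · linear_combination h
        · exact absurd h hp0
      rcases mul_eq_zero.mp (show (c - 1) * (c + 1) = (0:ℂ) by linear_combination hc2)
          with h | h
      · have hcc : c = 1 := by linear_combination h
        have hqp : q = Complex.I * p := by rw [hcc, one_mul] at hp; exact hp.symm
        rw [hqp] at hpq
        have hpp : p * conj' p = 2⁻¹ := by
          simp only [map_mul, Complex.conj_I] at hpq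
          linear_combination 2⁻¹ * hpq + (2⁻¹ * (p * conj' p)) * hI
        left
        rw [hqp]
        simp only [map_add, map_mul, map_neg, Complex.conj_I, Complex.conj_conj]
        linear_combination (p * conj' p) * (h00 + h11) + (Complex.I * (p * conj' p)) * h01
          - (Complex.I * (p * conj' p)) * h10 + (1 + s⁻¹) * hpp
          + (-(p * conj' p) * (b * conj' b + s⁻¹)) * hI
      · have hcc : c = -1 := by linear_combination h
        have hqp : q = -(Complex.I * p) := by
          rw [hcc] at hp
          linear_combination hp
        rw [hqp] at hpq
        have hpp : p * conj' p = 2⁻¹ := by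
          simp only [map_neg, map_mul, Complex.conj_I] at hpq
          linear_combination 2⁻¹ * hpq + (2⁻¹ * (p * conj' p)) * hI
        right
        rw [hqp]
        simp only [map_add, map_mul, map_neg, Complex.conj_I, Complex.conj_conj]
        linear_combination (p * conj' p) * (h00 + h11) - (Complex.I * (p * conj' p)) * h01
          + (Complex.I * (p * conj' p)) * h10 + (1 - s⁻¹) * hpp
          + (-(p * conj' p) * (b * conj' b - s⁻¹)) * hI
  · -- Z eigenvector
    by_cases hp0 : p = 0
    · have hqq : q * conj' q = 1 := by
        rw [hp0] at hpq
        simp only [map_zero, zero_mul, mul_zero, zero_add] at hpq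
        exact hpq
      right
      rw [hp0]
      simp only [map_add, map_mul, map_zero, Complex.conj_conj, zero_mul, mul_zero, zero_add]
      linear_combination (q * conj' q) * h11 + (2⁻¹ * (1 - s⁻¹)) * hqq
    · have hcc : c = 1 := by
        rcases mul_eq_zero.mp (show (1 - c) * p = 0 from by linear_combination hp)
            with h | h
        · linear_combination -h
        · exact absurd h hp0
      have hq0 : q = 0 := by
        rw [hcc] at hq
        linear_combination (-2⁻¹ : ℂ) * hq
      have hpp : p * conj' p = 1 := by
        rw [hq0] at hpq
        simp only [map_zero, mul_zero, zero_mul, add_zero] at hpq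
        exact hpq
      left
      rw [hq0]
      simp only [map_add, map_mul, map_zero, Complex.conj_conj, zero_mul, mul_zero, add_zero]
      linear_combination (p * conj' p) * h00 + (2⁻¹ * (1 + s⁻¹)) * hpp


lemma eigX (φ : ZMod 2 → ℂ) (c : ℂ) (h : Xm.mulVec φ = c • φ) :
    φ 1 = c * φ 0 ∧ φ 0 = c * φ 1 := by
  have e0 := congrFun h 0
  have e1 := congrFun h 1
  rw [mulVec2] at e0 e1
  simp [Xm, Pi.smul_apply, smul_eq_mul] at e0 e1
  exact ⟨e0, e1⟩

lemma eigY (φ : ZMod 2 → ℂ) (c : ℂ) (h : Ym.mulVec φ = c • φ) :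
    -(Complex.I * φ 1) = c * φ 0 ∧ Complex.I * φ 0 = c * φ 1 := by
  have e0 := congrFun h 0
  have e1 := congrFun h 1
  rw [mulVec2] at e0 e1
  simp [Ym, Pi.smul_apply, smul_eq_mul] at e0 e1
  refine ⟨by linear_combination e0, by linear_combination e1⟩

lemma eigZ (φ : ZMod 2 → ℂ) (c : ℂ) (h : Zm.mulVec φ = c • φ) :
    φ 0 = c * φ 0 ∧ -(φ 1) = c * φ 1 := by
  have e0 := congrFun h 0
  have e1 := congrFun h 1
  rw [mulVec2] at e0 e1
  simp [Zm, Pi.smul_apply, smul_eq_mul] at e0 e1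
  refine ⟨by linear_combination e0, by linear_combination e1⟩

/-- If `|G⟩` is the unit vector in `ℂ²` whose rank-one
projector is `½(I + (X+Y+Z)/√3)`, then the maximal squared overlap of `G` with
the six single-qubit pure stabilizer states equals `(3+√3)/6`, hence
`𝔇_min(G) = −log₂((3+√3)/6) = log₂(3−√3)`. -/
theorem golden_state_Dmin (G : ZMod 2 → ℂ)
    (hunit : (∑ x, Complex.normSq (G x)) = 1)
    (hproj : Matrix.vecMulVec G (star G) =
      (2 : ℂ)⁻¹ • ((1 : Matrix (ZMod 2) (ZMod 2) ℂ) +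
        (Complex.ofReal (Real.sqrt 3))⁻¹ • (Xm + Ym + Zm))) :
    sSup { t : ℝ | ∃ φ : ZMod 2 → ℂ, IsStabState1 φ ∧
        t = ‖∑ x, (starRingEnd ℂ) (φ x) * G x‖ ^ 2 }
      = (3 + Real.sqrt 3) / 6 ∧
    - Real.logb 2 (sSup { t : ℝ | ∃ φ : ZMod 2 → ℂ, IsStabState1 φ ∧
        t = ‖∑ x, (starRingEnd ℂ) (φ x) * G x‖ ^ 2 })
      = Real.logb 2 (3 - Real.sqrt 3) := by
  set S := { t : ℝ | ∃ φ : ZMod 2 → ℂ, IsStabState1 φ ∧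
      t = ‖∑ x, (starRingEnd ℂ) (φ x) * G x‖ ^ 2 } with hS
  -- matrix entries
  have h00 : G 0 * conj' (G 0) = 2⁻¹ * (1 + (((Real.sqrt 3 : ℝ) : ℂ))⁻¹) := by
    have h := congrFun (congrFun hproj 0) 0
    simp [Matrix.vecMulVec_apply, Matrix.smul_apply, Matrix.add_apply, Matrix.one_apply,
      Xm, Ym, Zm, Pi.star_apply, Complex.star_def] at h
    linear_combination h
  have h01 : G 0 * conj' (G 1) = 2⁻¹ * ((((Real.sqrt 3 : ℝ) : ℂ))⁻¹ * (1 - Complex.I)) := by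
    have h := congrFun (congrFun hproj 0) 1
    simp [Matrix.vecMulVec_apply, Matrix.smul_apply, Matrix.add_apply, Matrix.one_apply,
      Xm, Ym, Zm, Pi.star_apply, Complex.star_def] at h
    linear_combination h
  have h10 : G 1 * conj' (G 0) = 2⁻¹ * ((((Real.sqrt 3 : ℝ) : ℂ))⁻¹ * (1 + Complex.I)) := by
    have h := congrFun (congrFun hproj 1) 0
    simp [Matrix.vecMulVec_apply, Matrix.smul_apply, Matrix.add_apply, Matrix.one_apply,
      Xm, Ym, Zm, Pi.star_apply, Complex.star_def] at h
    linear_combination h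
  have h11 : G 1 * conj' (G 1) = 2⁻¹ * (1 - (((Real.sqrt 3 : ℝ) : ℂ))⁻¹) := by
    have h := congrFun (congrFun hproj 1) 1
    simp [Matrix.vecMulVec_apply, Matrix.smul_apply, Matrix.add_apply, Matrix.one_apply,
      Xm, Ym, Zm, Pi.star_apply, Complex.star_def] at h
    linear_combination h
  -- classification of overlaps
  have key : ∀ φ : ZMod 2 → ℂ, IsStabState1 φ →
      ‖∑ x, (starRingEnd ℂ) (φ x) * G x‖ ^ 2 = (3 + Real.sqrt 3) / 6 ∨
      ‖∑ x, (starRingEnd ℂ) (φ x) * G x‖ ^ 2 = (3 - Real.sqrt 3) / 6 := by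
    rintro φ ⟨hn, c, hc⟩
    have hpq : φ 0 * conj' (φ 0) + φ 1 * conj' (φ 1) = 1 := by
      rw [sum_zmod2] at hn
      rw [Complex.mul_conj, Complex.mul_conj]
      exact_mod_cast hn
    have hshape : (φ 1 = c * φ 0 ∧ φ 0 = c * φ 1) ∨
        (-(Complex.I * φ 1) = c * φ 0 ∧ Complex.I * φ 0 = c * φ 1) ∨
        (φ 0 = c * φ 0 ∧ -(φ 1) = c * φ 1) := by
      rcases hc with h | h | h
      · exact Or.inl (eigX φ c h)
      · exact Or.inr (Or.inl (eigY φ c h))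
      · exact Or.inr (Or.inr (eigZ φ c h))
    have hz : (∑ x, (starRingEnd ℂ) (φ x) * G x)
        = conj' (φ 0) * G 0 + conj' (φ 1) * G 1 := sum_zmod2 _
    rcases overlap_cases ((Real.sqrt 3 : ℝ) : ℂ) (G 0) (G 1) (φ 0) (φ 1) c
        h00 h01 h10 h11 hpq hshape with h | h
    · left
      have hc2 : ((‖∑ x, (starRingEnd ℂ) (φ x) * G x‖ ^ 2 : ℝ) : ℂ)
          = (((3 + Real.sqrt 3) / 6 : ℝ) : ℂ) := by
        rw [norm_sq_cast, hz, h]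
        exact vplus
      exact_mod_cast hc2
    · right
      have hc2 : ((‖∑ x, (starRingEnd ℂ) (φ x) * G x‖ ^ 2 : ℝ) : ℂ)
          = (((3 - Real.sqrt 3) / 6 : ℝ) : ℂ) := by
        rw [norm_sq_cast, hz, h]
        exact vminus
      exact_mod_cast hc2
  -- membership
  have hmem : (3 + Real.sqrt 3) / 6 ∈ S := by
    refine ⟨fun x => if x = 0 then 1 else 0, ⟨?_, 1, Or.inr (Or.inr ?_)⟩, ?_⟩
    · rw [sum_zmod2]
      norm_num [(by decide : (1 : ZMod 2) ≠ 0)]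
    · funext x
      rw [mulVec2]
      fin_cases x <;>
        simp [Zm, (by decide : (1 : ZMod 2) ≠ 0), Pi.smul_apply, smul_eq_mul]
      all_goals rfl
    · have hz : (∑ x, (starRingEnd ℂ) ((fun x : ZMod 2 => if x = 0 then 1 else 0) x) * G x)
          = G 0 := by
        rw [sum_zmod2]
        norm_num [(by decide : (1 : ZMod 2) ≠ 0)]
      have hc2 : ((‖∑ x, (starRingEnd ℂ)
            ((fun x : ZMod 2 => if x = 0 then 1 else 0) x) * G x‖ ^ 2 : ℝ) : ℂ)
          = (((3 + Real.sqrt 3) / 6 : ℝ) : ℂ) := by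
        rw [norm_sq_cast, hz, h00]
        exact vplus
      have := hc2
      exact (by exact_mod_cast this : _ = ((3 + Real.sqrt 3) / 6 : ℝ)).symm
  -- upper bound
  have hub : ∀ t ∈ S, t ≤ (3 + Real.sqrt 3) / 6 := by
    rintro t ⟨φ, hφ, rfl⟩
    rcases key φ hφ with h | h
    · rw [h]
    · rw [h]
      have := Real.sqrt_nonneg 3
      linarith
  have hSup : sSup S = (3 + Real.sqrt 3) / 6 :=
    le_antisymm (csSup_le ⟨_, hmem⟩ hub) (le_csSup ⟨_, hub⟩ hmem)
  refine ⟨hSup, ?_⟩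
  rw [hSup, ← Real.logb_inv]
  congr 1
  have h3 : Real.sqrt 3 ^ 2 = 3 := Real.sq_sqrt (by norm_num)
  exact inv_eq_of_mul_eq_one_right (by linear_combination (-(1:ℝ)/6) * h3)


end Magic1
end
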